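/- If b > 1, x > 0, and |J₀(y)| ≤ √(2/(π y)) for all y > 0, then |I(b,x)| ≤ ((2 - 4/π)/3) · x/b³ + √(2/π) · √(b/x). -/

import Mathlib

open Real Set MeasureTheory intervalIntegral

private lemma qstep {c r t : ℝ} (hc : 1/2 < c) (hr : 0 ≤ r) (hrt : r ≤ t)
    (hq : (6*c-1) + (9*c^2-6*c)*r - 9*c^2*r^2 ≤ 0) :
    (6*c-1) + (9*c^2-6*c)*t - 9*c^2*t^2 ≤ 0 := by
  rcases eq_or_lt_of_le hr with h0 | h0
  · exfalso; rw [← h0] at hq; norm_num at hq; linarith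
  · have key : r * ((6*c-1) + (9*c^2-6*c)*t - 9*c^2*t^2)
        = t * ((6*c-1) + (9*c^2-6*c)*r - 9*c^2*r^2) - (t-r)*(6*c-1)
          - 9*c^2*r*t*(t-r) := by ring
    have h1 : t * ((6*c-1) + (9*c^2-6*c)*r - 9*c^2*r^2) ≤ 0 :=
      mul_nonpos_of_nonneg_of_nonpos (hr.trans hrt) hq
    have h2 : 0 ≤ (t-r)*(6*c-1) := by nlinarith
    have h3 : 0 ≤ 9*c^2*r*t*(t-r) :=
      mul_nonneg (mul_nonneg (mul_nonneg (by positivity) h0.le) (hr.trans hrt))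
        (sub_nonneg.2 hrt)
    have h4 : r * ((6*c-1) + (9*c^2-6*c)*t - 9*c^2*t^2) ≤ 0 := by
      rw [key]; linarith
    by_contra hpos
    push_neg at hpos
    nlinarith [mul_pos h0 hpos]

private lemma cubic_aux (c : ℝ) (hc : 1/2 < c) (hc1 : π/2 ≤ c + 1) {s : ℝ}
    (h0 : 0 ≤ s) (h1 : s ≤ 1) :
    Real.arcsin s ≤ s + c * s^3 := by
  set h : ℝ → ℝ := fun r => c * r^3 + r - Real.arcsin r with hdef
  have hcont : Continuous h := by
    apply Continuous.sub
    · exact (continuous_const.mul (continuous_pow 3)).add continuous_id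
    · exact Real.continuous_arcsin
  -- derivative on (-1,1)
  have hderiv : ∀ r : ℝ, -1 < r → r < 1 →
      HasDerivAt h (3*c*r^2 + 1 - 1/Real.sqrt (1 - r^2)) r := by
    intro r hr1 hr2
    have ha : HasDerivAt Real.arcsin (1/Real.sqrt (1 - r^2)) r :=
      Real.hasDerivAt_arcsin (by linarith) (by linarith)
    have hp : HasDerivAt (fun r : ℝ => c * r^3 + r) (c * (3 * r^2) + 1) r := by
      exact (((hasDerivAt_pow 3 r).const_mul c).add (hasDerivAt_id r)).congr_deriv
        (by norm_num)
    have := hp.sub ha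
    refine this.congr_deriv ?_
    ring
  -- sign of derivative vs Q
  have hQpos : ∀ r : ℝ, 0 ≤ r → r < 1 →
      0 ≤ (6*c-1) + (9*c^2-6*c)*r^2 - 9*c^2*(r^2)^2 →
      0 ≤ 3*c*r^2 + 1 - 1/Real.sqrt (1 - r^2) := by
    intro r hr0 hr1 hQ
    have hu : 0 < 1 - r^2 := by nlinarith
    have hw : 0 < Real.sqrt (1 - r^2) := Real.sqrt_pos.2 hu
    have hw2 : Real.sqrt (1 - r^2)^2 = 1 - r^2 := Real.sq_sqrt hu.le
    have hA : 0 ≤ (1 + 3*c*r^2) := by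
      nlinarith [mul_nonneg (by linarith : (0:ℝ) ≤ c) (sq_nonneg r)]
    have hsq : 1 ≤ ((1 + 3*c*r^2) * Real.sqrt (1 - r^2))^2 := by
      rw [mul_pow, hw2]
      nlinarith [mul_nonneg (sq_nonneg r) hQ]
    have hge : 1 ≤ (1 + 3*c*r^2) * Real.sqrt (1 - r^2) := by
      nlinarith [mul_nonneg hA hw.le]
    have := (div_le_iff₀ hw).2 hge
    linarith [(div_le_iff₀ hw).2 hge]
  have hQneg : ∀ r : ℝ, 0 ≤ r → r < 1 →
      (6*c-1) + (9*c^2-6*c)*r^2 - 9*c^2*(r^2)^2 ≤ 0 →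
      3*c*r^2 + 1 - 1/Real.sqrt (1 - r^2) ≤ 0 := by
    intro r hr0 hr1 hQ
    have hu : 0 < 1 - r^2 := by nlinarith
    have hw : 0 < Real.sqrt (1 - r^2) := Real.sqrt_pos.2 hu
    have hw2 : Real.sqrt (1 - r^2)^2 = 1 - r^2 := Real.sq_sqrt hu.le
    have hA : 0 ≤ (1 + 3*c*r^2) := by
      nlinarith [mul_nonneg (by linarith : (0:ℝ) ≤ c) (sq_nonneg r)]
    have hsq : ((1 + 3*c*r^2) * Real.sqrt (1 - r^2))^2 ≤ 1 := by
      rw [mul_pow, hw2]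
      nlinarith [mul_nonpos_of_nonneg_of_nonpos (sq_nonneg r) hQ]
    have hle : (1 + 3*c*r^2) * Real.sqrt (1 - r^2) ≤ 1 := by
      nlinarith [mul_nonneg hA hw.le]
    have := (le_div_iff₀ hw).2 hle
    linarith
  have h_at_0 : h 0 = 0 := by simp [hdef, Real.arcsin_zero]
  have h_at_1 : 0 ≤ h 1 := by
    simp only [hdef, Real.arcsin_one, one_pow, mul_one]
    linarith
  have goal : 0 ≤ h s := by
    by_cases hall : ∀ r ∈ Icc (0:ℝ) s, 0 ≤ (6*c-1) + (9*c^2-6*c)*r^2 - 9*c^2*(r^2)^2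
    · have hmono : MonotoneOn h (Icc 0 s) := by
        apply monotoneOn_of_deriv_nonneg (convex_Icc 0 s) hcont.continuousOn
        · intro r hr
          rw [interior_Icc] at hr
          exact ((hderiv r (by linarith [hr.1]) (by linarith [hr.2, h1])).differentiableAt).differentiableWithinAt
        · intro r hr
          rw [interior_Icc] at hr
          have hd := hderiv r (by linarith [hr.1]) (by linarith [hr.2, h1])
          rw [hd.deriv]
          exact hQpos r hr.1.le (by linarith [hr.2, h1]) (hall r ⟨hr.1.le, hr.2.le⟩)
      have := hmono (left_mem_Icc.2 h0) (right_mem_Icc.2 h0) h0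
      rw [h_at_0] at this; exact this
    · push_neg at hall
      obtain ⟨r, hrmem, hrQ⟩ := hall
      have hanti : AntitoneOn h (Icc s 1) := by
        apply antitoneOn_of_deriv_nonpos (convex_Icc s 1) hcont.continuousOn
        · intro u hu
          rw [interior_Icc] at hu
          exact ((hderiv u (by linarith [hu.1, hrmem.1, h0]) hu.2).differentiableAt).differentiableWithinAt
        · intro u hu
          rw [interior_Icc] at hu
          have hu0 : 0 ≤ u := le_trans h0 hu.1.le
          have hd := hderiv u (by linarith) hu.2
          rw [hd.deriv]
          apply hQneg u hu0 hu.2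
          apply qstep hc (sq_nonneg r)
          · have : r ≤ u := le_trans hrmem.2 hu.1.le
            exact pow_le_pow_left₀ hrmem.1 this 2
          · exact hrQ.le
      have := hanti (left_mem_Icc.2 h1) (right_mem_Icc.2 h1) h1
      linarith
  simp only [hdef] at goal
  linarith

private lemma arcsin_cubic_bound {s : ℝ} (h0 : 0 ≤ s) (h1 : s ≤ 1) :
    Real.arcsin s ≤ s + (π/2 - 1) * s^3 := by
  have := pi_gt_three
  exact cubic_aux (π/2 - 1) (by linarith) (by linarith) h0 h1


private lemma int_dom : IntervalIntegrable (fun t : ℝ => ((1:ℝ) - t) ^ (-(1:ℝ)/2 : ℝ))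
    volume 0 1 := by
  have h : IntervalIntegrable (fun t : ℝ => t ^ (-(1:ℝ)/2 : ℝ)) volume 0 1 :=
    intervalIntegrable_rpow' (by norm_num)
  simpa using (h.comp_sub_left 1).symm

private lemma int_div_sqrt {φ : ℝ → ℝ} (hφ : Continuous φ)
    (hbnd : ∀ t ∈ Ioc (0:ℝ) 1, |φ t| ≤ 1) :
    IntervalIntegrable (fun t : ℝ => φ t / Real.sqrt (1 - t^2)) volume 0 1 := by
  apply int_dom.mono_fun
  · exact ((hφ.measurable.div
      ((continuous_const.sub (continuous_pow 2)).sqrt.measurable)).aestronglyMeasurable)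
  · rw [Filter.EventuallyLE, ae_restrict_iff' measurableSet_uIoc]
    filter_upwards with t ht
    rw [uIoc_of_le (by norm_num : (0:ℝ) ≤ 1)] at ht
    have ht0 := ht.1
    have ht1 := ht.2
    rcases eq_or_lt_of_le ht1 with h1 | h1
    · subst h1
      simp [show (1:ℝ)-1^2 = 0 by norm_num, show (1:ℝ)-1 = 0 by norm_num,
        Real.zero_rpow (by norm_num : (-(1:ℝ)/2 : ℝ) ≠ 0)]
    · have hu : 0 < 1 - t := by linarith
      have hw : 0 < Real.sqrt (1 - t^2) := Real.sqrt_pos.2 (by nlinarith)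
      have hkey : Real.sqrt (1 - t) ≤ Real.sqrt (1 - t^2) := by
        apply Real.sqrt_le_sqrt; nlinarith
      have hwt : 0 < Real.sqrt (1 - t) := Real.sqrt_pos.2 hu
      have hrpow : ((1:ℝ) - t) ^ (-(1:ℝ)/2 : ℝ) = 1 / Real.sqrt (1 - t) := by
        rw [Real.sqrt_eq_rpow, show (-(1:ℝ)/2 : ℝ) = -(1/2:ℝ) by norm_num,
          Real.rpow_neg hu.le, one_div]
        norm_num
      have habs : ‖φ t / Real.sqrt (1 - t^2)‖ = |φ t| / Real.sqrt (1 - t^2) := by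
        rw [Real.norm_eq_abs, abs_div, abs_of_nonneg (Real.sqrt_nonneg _)]
      rw [habs, hrpow, Real.norm_eq_abs, abs_of_nonneg (by positivity : (0:ℝ) ≤ 1 / Real.sqrt (1-t))]
      exact div_le_div₀ (by norm_num) (hbnd t ht) hwt hkey

private lemma int_cube : IntervalIntegrable (fun t : ℝ => t^3 / Real.sqrt (1 - t^2))
    volume 0 1 := by
  apply int_div_sqrt (continuous_pow 3)
  intro t ht
  rw [abs_pow]
  exact pow_le_one₀ (abs_nonneg t) (abs_le.2 ⟨by linarith [ht.1], ht.2⟩)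

private lemma cube_integral :
    ∫ t in (0:ℝ)..1, t^3 / Real.sqrt (1 - t^2) = 2/3 := by
  have hF : ∀ t ∈ Ioo (0:ℝ) 1,
      HasDerivAt (fun t : ℝ => (1 - t^2) * Real.sqrt (1 - t^2) / 3 - Real.sqrt (1 - t^2))
        (t^3 / Real.sqrt (1 - t^2)) t := by
    intro t ht
    have hu : 0 < 1 - t^2 := by nlinarith [ht.1, ht.2]
    have hw : 0 < Real.sqrt (1 - t^2) := Real.sqrt_pos.2 hu
    have hw2 : Real.sqrt (1 - t^2)^2 = 1 - t^2 := Real.sq_sqrt hu.le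
    have hg : HasDerivAt (fun t : ℝ => 1 - t^2) (-(2*t)) t := by
      simpa using ((hasDerivAt_pow 2 t).const_sub 1)
    have hsqrt : HasDerivAt (fun t : ℝ => Real.sqrt (1 - t^2))
        (1 / (2 * Real.sqrt (1 - t^2)) * (-(2*t))) t :=
      (Real.hasDerivAt_sqrt hu.ne').comp t hg
    have hprod := ((hg.mul hsqrt).div_const 3).sub hsqrt
    have hwne : Real.sqrt (1 - t^2) ≠ 0 := hw.ne'
    refine hprod.congr_deriv ?_
    symm
    rw [← hw2]
    field_simp
    rw [Real.sqrt_sq hw.le]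
    linear_combination (3*t) * hw2
  have := intervalIntegral.integral_eq_sub_of_hasDeriv_right_of_le (by norm_num : (0:ℝ) ≤ 1)
    (f := fun t : ℝ => (1 - t^2) * Real.sqrt (1 - t^2) / 3 - Real.sqrt (1 - t^2))
    (by fun_prop)
    (fun t ht => (hF t ht).hasDerivWithinAt)
    int_cube
  rw [this]
  norm_num [Real.sqrt_one]

theorem I_two_term_bound (b x : ℝ) (hb : 1 < b) (hx : 0 < x)
    (hJ : ∀ y : ℝ, 0 < y →
      |(2 / π) * ∫ t in (0:ℝ)..1, Real.cos (y * t) / Real.sqrt (1 - t ^ 2)| ≤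
        Real.sqrt (2 / (π * y))) :
    |(2 / π) * ∫ t in (0:ℝ)..1,
        Real.cos (x * Real.arcsin (t / b)) / Real.sqrt (1 - t ^ 2)| ≤
      ((2 - 4 / π) / 3) * x / b ^ 3 + Real.sqrt (2 / π) * Real.sqrt (b / x) := by
  have hπ : 0 < π := pi_pos
  have hb0 : 0 < b := lt_trans one_pos hb
  have hπ3 := pi_gt_three
  have hcpos : 0 < π/2 - 1 := by linarith
  set f : ℝ → ℝ := fun t => Real.cos (x * Real.arcsin (t / b)) / Real.sqrt (1 - t^2) with hfdef
  set g : ℝ → ℝ := fun t => Real.cos (x / b * t) / Real.sqrt (1 - t^2) with hgdef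
  have hIf : IntervalIntegrable f volume 0 1 :=
    int_div_sqrt (Real.continuous_cos.comp (continuous_const.mul
      (Real.continuous_arcsin.comp (continuous_id'.div_const b))))
      (fun t _ => Real.abs_cos_le_one _)
  have hIg : IntervalIntegrable g volume 0 1 :=
    int_div_sqrt (Real.continuous_cos.comp (continuous_const.mul continuous_id'))
      (fun t _ => Real.abs_cos_le_one _)
  set C : ℝ := x * (π/2 - 1) / b^3 with hCdef
  have hC : 0 ≤ C := by positivity
  -- pointwise bound
  have hptwise : ∀ t ∈ Ioc (0:ℝ) 1, ‖f t - g t‖ ≤ C * (t^3 / Real.sqrt (1 - t^2)) := by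
    intro t ht
    have ht0 := ht.1
    have ht1 := ht.2
    have hs0 : 0 ≤ t / b := by positivity
    have hs1 : t / b ≤ 1 := by
      rw [div_le_one hb0]; linarith
    -- |cos A - cos B| ≤ |A - B|
    have hcos : ∀ A B : ℝ, |Real.cos A - Real.cos B| ≤ |A - B| := by
      intro A B
      rw [Real.cos_sub_cos]
      have h1 : |Real.sin ((A+B)/2)| ≤ 1 := Real.abs_sin_le_one _
      have h2 : |Real.sin ((A-B)/2)| ≤ |(A-B)/2| := Real.abs_sin_le_abs
      have hm : |Real.sin ((A+B)/2)| * |Real.sin ((A-B)/2)| ≤ 1 * |(A-B)/2| :=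
        mul_le_mul h1 h2 (abs_nonneg _) zero_le_one
      have heq : |(-2) * Real.sin ((A+B)/2) * Real.sin ((A-B)/2)|
          = 2 * (|Real.sin ((A+B)/2)| * |Real.sin ((A-B)/2)|) := by
        rw [abs_mul, abs_mul]
        norm_num
        ring
      rw [heq, abs_div] at *
      norm_num at hm ⊢
      linarith
    -- arcsin bound
    have harc_ge : t/b ≤ Real.arcsin (t/b) := by
      have h := Real.sin_le (Real.arcsin_nonneg.2 hs0)
      rwa [Real.sin_arcsin (by linarith) hs1] at h
    have harc_le : Real.arcsin (t/b) ≤ t/b + (π/2 - 1) * (t/b)^3 :=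
      arcsin_cubic_bound hs0 hs1
    have e1 : x * (t / b) ≤ x * Real.arcsin (t / b) :=
      mul_le_mul_of_nonneg_left harc_ge hx.le
    have e2 : x * Real.arcsin (t / b) ≤ x * (t / b + (π/2 - 1) * (t / b)^3) :=
      mul_le_mul_of_nonneg_left harc_le hx.le
    have e2' : x * (t / b + (π/2 - 1) * (t / b)^3)
        = x * (t / b) + x * (π/2 - 1) * (t / b)^3 := by ring
    rw [e2'] at e2
    have hAB : |x * Real.arcsin (t/b) - x / b * t| ≤ x * (π/2 - 1) * (t/b)^3 := by
      rw [show x / b * t = x * (t / b) by ring]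
      rw [abs_of_nonneg (by linarith)]
      linarith
    have hnum : |Real.cos (x * Real.arcsin (t/b)) - Real.cos (x / b * t)|
        ≤ x * (π/2 - 1) * (t/b)^3 :=
      le_trans (hcos _ _) hAB
    -- divide by sqrt
    rcases eq_or_lt_of_le ht1 with h1 | h1
    · subst h1
      simp only [hfdef, hgdef]
      norm_num
    · have hw : 0 < Real.sqrt (1 - t^2) := Real.sqrt_pos.2 (by nlinarith)
      have : f t - g t = (Real.cos (x * Real.arcsin (t/b)) - Real.cos (x / b * t))
          / Real.sqrt (1 - t^2) := by
        simp only [hfdef, hgdef]; rw [div_sub_div_same]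
      rw [this, Real.norm_eq_abs, abs_div, abs_of_nonneg (Real.sqrt_nonneg _)]
      have hstep := (div_le_div_iff_of_pos_right hw).2 hnum
      apply le_trans hstep
      rw [hCdef]
      have : x * (π/2 - 1) * (t/b)^3 / Real.sqrt (1 - t^2)
          = x * (π/2 - 1) / b^3 * (t^3 / Real.sqrt (1 - t^2)) := by
        rw [div_pow]; ring
      rw [this]
  -- integral bound on difference
  have hbint : IntervalIntegrable (fun t : ℝ => C * (t^3 / Real.sqrt (1 - t^2))) volume 0 1 :=
    int_cube.const_mul C
  have hdiff_bound : ‖∫ t in (0:ℝ)..1, (f t - g t)‖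
      ≤ |∫ t in (0:ℝ)..1, C * (t^3 / Real.sqrt (1 - t^2))| := by
    apply intervalIntegral.norm_integral_le_abs_of_norm_le _ hbint
    rw [ae_restrict_iff' measurableSet_uIoc]
    filter_upwards with t ht
    rw [uIoc_of_le (by norm_num : (0:ℝ) ≤ 1)] at ht
    exact hptwise t ht
  have hint_val : ∫ t in (0:ℝ)..1, C * (t^3 / Real.sqrt (1 - t^2)) = C * (2/3) := by
    rw [intervalIntegral.integral_const_mul, cube_integral]
  have hdiff : |(∫ t in (0:ℝ)..1, f t) - ∫ t in (0:ℝ)..1, g t| ≤ C * (2/3) := by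
    rw [← intervalIntegral.integral_sub hIf hIg]
    calc |∫ t in (0:ℝ)..1, (f t - g t)| ≤ |∫ t in (0:ℝ)..1, C * (t^3 / Real.sqrt (1 - t^2))| :=
          hdiff_bound
      _ = C * (2/3) := by rw [hint_val, abs_of_nonneg (by positivity)]
  -- use hJ
  have hxb : 0 < x / b := by positivity
  have hJg : |(2/π) * ∫ t in (0:ℝ)..1, g t| ≤ Real.sqrt (2/π) * Real.sqrt (b/x) := by
    have h := hJ (x/b) hxb
    have heq : Real.sqrt (2 / (π * (x/b))) = Real.sqrt (2/π) * Real.sqrt (b/x) := by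
      rw [← Real.sqrt_mul (by positivity : (0:ℝ) ≤ 2/π)]
      congr 1
      field_simp
    rw [← heq]
    exact h
  -- assemble
  have htri : |(2/π) * ∫ t in (0:ℝ)..1, f t|
      ≤ |(2/π) * ((∫ t in (0:ℝ)..1, f t) - ∫ t in (0:ℝ)..1, g t)|
        + |(2/π) * ∫ t in (0:ℝ)..1, g t| := by
    have : (2/π) * ∫ t in (0:ℝ)..1, f t
        = (2/π) * ((∫ t in (0:ℝ)..1, f t) - ∫ t in (0:ℝ)..1, g t)
          + (2/π) * ∫ t in (0:ℝ)..1, g t := by ring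
    rw [this]
    exact abs_add_le _ _
  have hterm1 : |(2/π) * ((∫ t in (0:ℝ)..1, f t) - ∫ t in (0:ℝ)..1, g t)|
      ≤ ((2 - 4/π)/3) * x / b^3 := by
    rw [abs_mul, abs_of_pos (by positivity : (0:ℝ) < 2/π)]
    have := mul_le_mul_of_nonneg_left hdiff (by positivity : (0:ℝ) ≤ 2/π)
    apply le_trans this
    rw [hCdef]
    rw [show (2/π) * (x * (π/2 - 1) / b^3 * (2/3)) = ((2 - 4/π)/3) * x / b^3 by
      field_simp; ring]
  calc |(2/π) * ∫ t in (0:ℝ)..1, f t|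
      ≤ |(2/π) * ((∫ t in (0:ℝ)..1, f t) - ∫ t in (0:ℝ)..1, g t)|
        + |(2/π) * ∫ t in (0:ℝ)..1, g t| := htri
    _ ≤ ((2 - 4/π)/3) * x / b^3 + Real.sqrt (2/π) * Real.sqrt (b/x) :=
        add_le_add hterm1 hJg
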